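/- Let G be a finitely generated group, let G' be its commutator subgroup, and let N be the subgroup of G containing G' such that N/G' is the torsion subgroup of G/G'. Then the following are equivalent: (a) for every nonzero homomorphism χ : G → (ℝ, +) and every finite subgroup K of G, at least one of χ(N_G(K)) = {0}, χ(N_G(K)) is infinite cyclic, or χ(N_G(K)) = χ(G) holds; (b) for every finite subgroup K of G, at least one of the following holds: (i) N_G(K) ⊆ N; (ii) the image of N_G(K) in G/N is infinite cyclic; (iii) N_G(K)·N = G. -/

import Mathlib

open Polynomial
open scoped commutatorElement

lemma li_powers : LinearIndependent ℤ (fun n : ℕ => (liouvilleNumber 3) ^ n) := by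
  have ht : Transcendental ℚ (liouvilleNumber 3) := by
    have h := transcendental_liouvilleNumber (by norm_num : 2 ≤ 3)
    intro ha
    exact h ((IsFractionRing.isAlgebraic_iff ℤ ℚ ℝ).mpr ha)
  have hinj : Function.Injective (aeval (liouvilleNumber 3) : ℚ[X] →ₐ[ℚ] ℝ) :=
    transcendental_iff_injective.mp ht
  have li : LinearIndependent ℚ (fun n : ℕ => (liouvilleNumber 3) ^ n) := by
    have h1 := (Polynomial.basisMonomials ℚ).linearIndependent
    have h2 := h1.map' (aeval (liouvilleNumber 3) : ℚ[X] →ₐ[ℚ] ℝ).toLinearMap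
      (LinearMap.ker_eq_bot.mpr hinj)
    convert h2 using 1
    funext n
    simp [Polynomial.coe_basisMonomials, Polynomial.aeval_monomial]
    all_goals rfl
  exact li.restrict_scalars (by
    intro a b h
    simpa using h)

lemma exists_addEmbedding_real {Q : Type*} [Group Q] (hc : ∀ a b : Q, a * b = b * a)
    (hfg : Group.FG Q)
    (htf : ∀ (q : Q) (n : ℕ), 0 < n → q ^ n = 1 → q = 1) :
    ∃ j : Q → ℝ, Function.Injective j ∧ ∀ a b : Q, j (a * b) = j a + j b := by
  classical
  letI : CommGroup Q := { (inferInstance : Group Q) with mul_comm := hc }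
  haveI : Group.FG Q := hfg
  haveI : AddGroup.FG (Additive Q) := inferInstance
  haveI : Module.Finite ℤ (Additive Q) := Module.Finite.iff_addGroup_fg.mpr ‹_›
  haveI : NoZeroSMulDivisors ℤ (Additive Q) := by
    constructor
    intro c x h
    by_cases hc : c = 0
    · exact Or.inl hc
    · right
      have hx : x.toMul ^ c = 1 := h
      have hx2 : x.toMul ^ (c.natAbs) = 1 := by
        rcases Int.natAbs_eq c with he | he
        · rw [← zpow_natCast, ← he, hx]
        · rw [← zpow_natCast, ← neg_neg ((c.natAbs : ℤ)), ← he, zpow_neg, hx, inv_one]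
      have := htf x.toMul c.natAbs (Int.natAbs_pos.mpr hc) hx2
      exact this
  haveI : Module.Free ℤ (Additive Q) := Module.free_of_finite_type_torsion_free'
  set b := Module.Free.chooseBasis ℤ (Additive Q) with hb
  set ι := Module.Free.ChooseBasisIndex ℤ (Additive Q)
  haveI : Fintype ι := Module.Free.ChooseBasisIndex.fintype ℤ (Additive Q)
  set e : ι → ℕ := fun i => (Fintype.equivFin ι i : ℕ) with he
  have e_inj : Function.Injective e := by
    intro i j h
    exact (Fintype.equivFin ι).injective (Fin.val_injective h)
  have li : LinearIndependent ℤ (fun i : ι => (liouvilleNumber 3) ^ (e i)) :=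
    li_powers.comp e e_inj
  set j : Q → ℝ := fun q => ∑ i, ((b.repr (Additive.ofMul q)) i : ℝ) * (liouvilleNumber 3) ^ (e i)
    with hj
  refine ⟨j, ?_, ?_⟩
  · intro q1 q2 h
    have : ∑ i, (((b.repr (Additive.ofMul q1)) i - (b.repr (Additive.ofMul q2)) i : ℤ) : ℝ)
        * (liouvilleNumber 3) ^ (e i) = 0 := by
      simp only [hj] at h
      push_cast
      simp only [sub_mul]
      rw [Finset.sum_sub_distrib, h, sub_self]
    have hz := Fintype.linearIndependent_iff.mp li
      (fun i => (b.repr (Additive.ofMul q1)) i - (b.repr (Additive.ofMul q2)) i) ?_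
    · have : b.repr (Additive.ofMul q1) = b.repr (Additive.ofMul q2) := by
        ext i
        have := hz i
        linarith [sub_eq_zero.mp this]
      have := b.repr.injective this
      exact Additive.ofMul.injective this
    · rw [← this]
      congr 1
      funext i
      rw [zsmul_eq_mul]
  · intro a c
    have : Additive.ofMul (a * c) = Additive.ofMul a + Additive.ofMul c := rfl
    simp only [hj, this, map_add, Finsupp.add_apply]
    push_cast
    simp only [add_mul]
    exact Finset.sum_add_distrib

lemma addlike {H : Type*} [Group H] {f : H → ℝ} (hf : ∀ a b : H, f (a * b) = f a + f b) :
    f 1 = 0 ∧ (∀ g : H, f g⁻¹ = - f g) ∧ (∀ (g : H) (n : ℕ), f (g ^ n) = n * f g) ∧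
    (∀ (g : H) (n : ℤ), f (g ^ n) = n * f g) := by
  have h1 : f 1 = 0 := by have := hf 1 1; simp at this; linarith
  have hinv : ∀ g : H, f g⁻¹ = - f g := by
    intro g
    have := hf g g⁻¹
    simp [h1] at this
    linarith
  have hnpow : ∀ (g : H) (n : ℕ), f (g ^ n) = n * f g := by
    intro g n
    induction n with
    | zero => simpa using h1
    | succ k ih => rw [pow_succ, hf, ih]; push_cast; ring
  refine ⟨h1, hinv, hnpow, ?_⟩
  intro g n
  rcases n with n | n
  · rw [Int.ofNat_eq_coe, zpow_natCast, hnpow]; norm_num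
  · rw [zpow_negSucc, hinv, hnpow]; push_cast; ring

theorem stmt9 {G : Type*} [Group G] (hfg : Group.FG G)
    (N : Subgroup G) [N.Normal]
    (hN : ∀ g : G, g ∈ N ↔ ∃ n : ℕ, 0 < n ∧ g ^ n ∈ commutator G) :
    (∀ χ : G → ℝ, (∀ a b : G, χ (a * b) = χ a + χ b) → (∃ g : G, χ g ≠ 0) →
      ∀ K : Subgroup G, (K : Set G).Finite →
        (χ '' ((Subgroup.normalizer (K : Set G)) : Set G) = {0}) ∨
        (∃ r : ℝ, r ≠ 0 ∧ χ '' ((Subgroup.normalizer (K : Set G)) : Set G) = {y : ℝ | ∃ n : ℤ, y = n * r}) ∨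
        (χ '' ((Subgroup.normalizer (K : Set G)) : Set G) = Set.range χ)) ↔
    (∀ K : Subgroup G, (K : Set G).Finite →
        ((Subgroup.normalizer (K : Set G)) ≤ N) ∨
        (∃ z : G ⧸ N, Subgroup.map (QuotientGroup.mk' N) (Subgroup.normalizer (K : Set G)) = Subgroup.zpowers z ∧
          ¬ IsOfFinOrder z) ∨
        (∀ g : G, ∃ a ∈ (Subgroup.normalizer (K : Set G)), ∃ n ∈ N, g = a * n)) := by
  constructor
  · -- (a) → (b)
    intro ha K hK
    by_cases hle : (Subgroup.normalizer (K : Set G)) ≤ N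
    · exact Or.inl hle
    have hQcomm : ∀ a b : G ⧸ N, a * b = b * a := by
      intro a b
      refine QuotientGroup.induction_on a fun x => QuotientGroup.induction_on b fun y => ?_
      rw [← QuotientGroup.mk_mul, ← QuotientGroup.mk_mul, QuotientGroup.eq]
      refine (hN _).mpr ⟨1, one_pos, ?_⟩
      rw [pow_one]
      have hcom : (x * y)⁻¹ * (y * x) = ⁅y⁻¹, x⁻¹⁆ := by group
      rw [hcom, commutator_def]
      exact Subgroup.commutator_mem_commutator (Subgroup.mem_top _) (Subgroup.mem_top _)
    haveI := hfg
    have hQfg : Group.FG (G ⧸ N) := inferInstance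
    have hQtf : ∀ (q : G ⧸ N) (n : ℕ), 0 < n → q ^ n = 1 → q = 1 := by
      intro q n hn
      refine QuotientGroup.induction_on q fun g => ?_
      intro hq
      rw [← QuotientGroup.mk_pow, QuotientGroup.eq_one_iff] at hq
      obtain ⟨m, hm, hcm⟩ := (hN _).mp hq
      rw [QuotientGroup.eq_one_iff]
      exact (hN g).mpr ⟨n * m, by positivity, by rwa [pow_mul]⟩
    obtain ⟨j, jinj, jadd⟩ := exists_addEmbedding_real hQcomm hQfg hQtf
    obtain ⟨j1, jinv, jnpow, jzpow⟩ := addlike jadd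
    obtain ⟨w, hw, hwN⟩ := SetLike.not_le_iff_exists.mp hle
    set χ : G → ℝ := fun g => j (QuotientGroup.mk g) with hχ
    have hχadd : ∀ a b : G, χ (a * b) = χ a + χ b := by
      intro a b
      show j (QuotientGroup.mk (a * b)) = j (QuotientGroup.mk a) + j (QuotientGroup.mk b)
      rw [QuotientGroup.mk_mul, jadd]
    have hχw : χ w ≠ 0 := by
      intro h
      have h2 : j (QuotientGroup.mk w) = j (1 : G ⧸ N) := by rw [j1]; exact h
      exact hwN ((QuotientGroup.eq_one_iff w).mp (jinj h2))
    rcases ha χ hχadd ⟨w, hχw⟩ K hK with h0 | ⟨r, hr0, him⟩ | hrange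
    · exfalso
      apply hχw
      have : χ w ∈ χ '' ((Subgroup.normalizer (K : Set G)) : Set G) := ⟨w, hw, rfl⟩
      rw [h0] at this
      exact this
    · right; left
      have hrmem : r ∈ χ '' ((Subgroup.normalizer (K : Set G)) : Set G) := by
        rw [him]; exact ⟨1, by simp⟩
      obtain ⟨a₀, ha₀, ha₀r⟩ := hrmem
      refine ⟨QuotientGroup.mk a₀, ?_, ?_⟩
      · ext q
        constructor
        · intro hq
          obtain ⟨a, ha, rfl⟩ := Subgroup.mem_map.mp hq
          have hmem : χ a ∈ χ '' ((Subgroup.normalizer (K : Set G)) : Set G) := ⟨a, ha, rfl⟩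
          rw [him] at hmem
          obtain ⟨n, hn⟩ := hmem
          have heq : j (QuotientGroup.mk a) = j ((QuotientGroup.mk a₀ : G ⧸ N) ^ n) := by
            rw [jzpow]
            show χ a = (n : ℝ) * χ a₀
            rw [hn, ha₀r]
          rw [QuotientGroup.mk'_apply]
          exact Subgroup.mem_zpowers_iff.mpr ⟨n, (jinj heq).symm⟩
        · intro hq
          obtain ⟨n, hn⟩ := Subgroup.mem_zpowers_iff.mp hq
          exact Subgroup.mem_map.mpr ⟨a₀ ^ n, (Subgroup.normalizer (K : Set G)).zpow_mem ha₀ n,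
            by rw [QuotientGroup.mk'_apply, QuotientGroup.mk_zpow]; exact hn⟩
      · intro hford
        obtain ⟨n, hn, hpow⟩ := isOfFinOrder_iff_pow_eq_one.mp hford
        have hz : (n : ℝ) * χ a₀ = 0 := by
          calc (n : ℝ) * χ a₀ = j ((QuotientGroup.mk a₀ : G ⧸ N) ^ n) := (jnpow _ n).symm
          _ = j 1 := by rw [hpow]
          _ = 0 := j1
        have hn' : (n : ℝ) ≠ 0 := Nat.cast_ne_zero.mpr hn.ne'
        rcases mul_eq_zero.mp hz with h | h
        · exact hn' h
        · rw [ha₀r] at h; exact hr0 h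
    · right; right
      intro g
      have hmem : χ g ∈ χ '' ((Subgroup.normalizer (K : Set G)) : Set G) := by
        rw [hrange]; exact ⟨g, rfl⟩
      obtain ⟨a, han, hag⟩ := hmem
      have heq : (QuotientGroup.mk a : G ⧸ N) = QuotientGroup.mk g := jinj hag
      exact ⟨a, han, a⁻¹ * g, (QuotientGroup.eq).mp heq, by group⟩
  · -- (b) → (a)
    intro hb χ hadd _hne K hK
    -- basic properties of χ
    have h1 : χ 1 = 0 := by have := hadd 1 1; simp at this; linarith
    have hinv : ∀ g : G, χ g⁻¹ = -χ g := by
      intro g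
      have := hadd g g⁻¹
      simp [h1] at this
      linarith
    have hnpow : ∀ (g : G) (n : ℕ), χ (g ^ n) = n * χ g := by
      intro g n
      induction n with
      | zero => simpa using h1
      | succ k ih => rw [pow_succ, hadd, ih]; push_cast; ring
    have hzpow : ∀ (g : G) (n : ℤ), χ (g ^ n) = n * χ g := by
      intro g n
      rcases n with n | n
      · rw [Int.ofNat_eq_coe, zpow_natCast, hnpow]; norm_num
      · rw [zpow_negSucc, hinv, hnpow]; push_cast; ring
    have hcommEl : ∀ g ∈ commutator G, χ g = 0 := by
      intro g hg
      rw [commutator_def, Subgroup.commutator_def] at hg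
      refine Subgroup.closure_induction ?_ h1 ?_ ?_ hg
      · rintro x ⟨g₁, -, g₂, -, rfl⟩
        rw [commutatorElement_def]
        rw [hadd, hadd, hadd, hinv, hinv]
        ring
      · intro x y _ _ hx hy
        rw [hadd, hx, hy, add_zero]
      · intro x _ hx
        rw [hinv, hx, neg_zero]
    have hNzero : ∀ n ∈ N, χ n = 0 := by
      intro n hn
      obtain ⟨k, hk, hmem⟩ := (hN n).mp hn
      have := hcommEl _ hmem
      rw [hnpow] at this
      have hk' : (k : ℝ) ≠ 0 := by positivity
      rcases mul_eq_zero.mp this with h | h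
      · exact absurd h hk'
      · exact h
    have hcong : ∀ a g : G, (QuotientGroup.mk a : G ⧸ N) = QuotientGroup.mk g → χ a = χ g := by
      intro a g h
      have hmem : a⁻¹ * g ∈ N := by rwa [QuotientGroup.eq] at h
      have : g = a * (a⁻¹ * g) := by group
      rw [this, hadd, hNzero _ hmem, add_zero]
    rcases hb K hK with hle | ⟨z, hmap, hford⟩ | hsurj
    · -- normalizer ≤ N
      left
      ext y
      simp only [Set.mem_image, Set.mem_singleton_iff]
      constructor
      · rintro ⟨a, ha, rfl⟩
        exact hNzero a (hle ha)
      · rintro rfl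
        exact ⟨1, (Subgroup.normalizer (K : Set G)).one_mem, h1⟩
    · -- infinite cyclic case
      have hz : z ∈ Subgroup.map (QuotientGroup.mk' N) (Subgroup.normalizer (K : Set G)) := by
        rw [hmap]; exact Subgroup.mem_zpowers z
      obtain ⟨a₀, ha₀, ha₀z⟩ := Subgroup.mem_map.mp hz
      set r := χ a₀ with hr
      have hval : ∀ a ∈ (Subgroup.normalizer (K : Set G)), ∃ n : ℤ, χ a = n * r := by
        intro a ha
        have : (QuotientGroup.mk' N) a ∈ Subgroup.map (QuotientGroup.mk' N) (Subgroup.normalizer (K : Set G)) :=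
          Subgroup.mem_map_of_mem _ ha
        rw [hmap] at this
        obtain ⟨n, hn⟩ := Subgroup.mem_zpowers_iff.mp this
        refine ⟨n, ?_⟩
        have hn' : z ^ n = (QuotientGroup.mk a : G ⧸ N) := hn
        have : (QuotientGroup.mk (a₀ ^ n) : G ⧸ N) = QuotientGroup.mk a := by
          rw [← hn', ← ha₀z, QuotientGroup.mk'_apply, QuotientGroup.mk_zpow]
        rw [← hcong _ _ this, hzpow]
      by_cases hr0 : r = 0
      · left
        ext y
        simp only [Set.mem_image, Set.mem_singleton_iff]
        constructor
        · rintro ⟨a, ha, rfl⟩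
          obtain ⟨n, hn⟩ := hval a ha
          rw [hn, hr0, mul_zero]
        · rintro rfl
          exact ⟨1, (Subgroup.normalizer (K : Set G)).one_mem, h1⟩
      · right; left
        refine ⟨r, hr0, ?_⟩
        ext y
        simp only [Set.mem_image, Set.mem_setOf_eq]
        constructor
        · rintro ⟨a, ha, rfl⟩
          exact hval a ha
        · rintro ⟨n, rfl⟩
          exact ⟨a₀ ^ n, (Subgroup.normalizer (K : Set G)).zpow_mem ha₀ n, by rw [hzpow]⟩
    · -- surjective case
      right; right
      ext y
      simp only [Set.mem_image, Set.mem_range]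
      constructor
      · rintro ⟨a, _, rfl⟩
        exact ⟨a, rfl⟩
      · rintro ⟨g, rfl⟩
        obtain ⟨a, ha, n, hn, rfl⟩ := hsurj g
        exact ⟨a, ha, by rw [hadd, hNzero _ hn, add_zero]⟩
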